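/- With the boundary convention ΔH(0) := log₂|A|, set Δ²H(1) := H(1) - log₂|A|, Δ²H(L) := H(L) - 2H(L-1) + H(L-2) for L ≥ 2, and Δ³H(L) := Δ²H(L) - Δ²H(L-1) for L ≥ 2. If the series Σ_{L=2}^∞ (L-1)·Δ³H(L) converges, then the total predictability G := Σ_{L=1}^∞ Δ²H(L) satisfies G = -Σ_{L=2}^∞ (L-1)·Δ³H(L). -/

import Mathlib

open MeasureTheory Real Filter

/-- The probability of the cylinder set of sequences beginning with the word `w`. -/
noncomputable def cylP {A : Type*} [MeasurableSpace A] (μ : Measure (ℕ → A)) {L : ℕ}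
    (w : Fin L → A) : ℝ :=
  (μ {x : ℕ → A | ∀ i : Fin L, x i.1 = w i}).toReal

/-- The block entropy `H(L)` in bits, with the convention `0 · log₂ 0 = 0`;
terms with `cylP μ w = 0` contribute `0` to the sum. -/
noncomputable def blockH {A : Type*} [MeasurableSpace A] [Fintype A]
    (μ : Measure (ℕ → A)) (L : ℕ) : ℝ :=
  -∑ w : Fin L → A, cylP μ w * Real.logb 2 (cylP μ w)

/-- The left shift on one-sided sequences. -/
def shift {A : Type*} : (ℕ → A) → (ℕ → A) := fun x n => x (n + 1)


set_option linter.unusedSectionVars false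

section Aux
variable {A : Type*} [MeasurableSpace A] [MeasurableSingletonClass A] [Fintype A]
variable (μ : Measure (ℕ → A)) [IsProbabilityMeasure μ]

lemma measurableSet_cyl {L : ℕ} (w : Fin L → A) :
    MeasurableSet {x : ℕ → A | ∀ i : Fin L, x i.1 = w i} := by
  have h : {x : ℕ → A | ∀ i : Fin L, x i.1 = w i}
      = ⋂ i : Fin L, (fun x : ℕ → A => x i.1) ⁻¹' {w i} := by
    ext x; simp [Set.mem_iInter]
  rw [h]
  exact MeasurableSet.iInter fun i => (measurable_pi_apply _) (measurableSet_singleton _)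

lemma cylP_nonneg {L : ℕ} (w : Fin L → A) : 0 ≤ cylP μ w := ENNReal.toReal_nonneg

lemma sum_cylP_snoc {L : ℕ} (w : Fin L → A) :
    ∑ a : A, cylP μ (Fin.snoc w a) = cylP μ w := by
  classical
  have hset : {x : ℕ → A | ∀ i : Fin L, x i.1 = w i}
      = ⋃ a : A, {x : ℕ → A | ∀ i : Fin (L+1), x i.1 = (Fin.snoc w a : Fin (L+1) → A) i} := by
    ext x
    simp only [Set.mem_setOf_eq, Set.mem_iUnion]
    constructor
    · intro hx
      refine ⟨x L, fun i => ?_⟩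
      refine Fin.lastCases ?_ (fun j => ?_) i
      · simp [Fin.snoc_last]
      · simpa [Fin.snoc_castSucc] using hx j
    · rintro ⟨a, hx⟩ i
      simpa [Fin.snoc_castSucc] using hx i.castSucc
  have hdisj : Pairwise (Function.onFun Disjoint
      (fun a : A => {x : ℕ → A | ∀ i : Fin (L+1), x i.1 = (Fin.snoc w a : Fin (L+1) → A) i})) := by
    intro a b hab
    refine Set.disjoint_left.2 fun x hxa hxb => hab ?_
    have h1 := hxa (Fin.last L)
    have h2 := hxb (Fin.last L)
    simp [Fin.snoc_last] at h1 h2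
    rw [← h1, ← h2]
  have hμ := measure_iUnion (μ := μ) hdisj (fun a => measurableSet_cyl _)
  rw [cylP, hset, hμ, tsum_fintype]
  rw [ENNReal.toReal_sum (fun a _ => measure_ne_top μ _)]
  rfl

lemma sum_cylP_cons (hstat : MeasurePreserving (shift (A := A)) μ μ) {L : ℕ} (w : Fin L → A) :
    ∑ a : A, cylP μ (Fin.cons a w) = cylP μ w := by
  classical
  have hpre : shift ⁻¹' {x : ℕ → A | ∀ i : Fin L, x i.1 = w i}
      = ⋃ a : A, {x : ℕ → A | ∀ i : Fin (L+1), x i.1 = (Fin.cons a w : Fin (L+1) → A) i} := by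
    ext x
    simp only [Set.mem_preimage, Set.mem_setOf_eq, Set.mem_iUnion]
    constructor
    · intro hx
      refine ⟨x 0, fun i => ?_⟩
      refine Fin.cases ?_ (fun j => ?_) i
      · simp
      · simpa [Fin.val_succ, shift] using hx j
    · rintro ⟨a, hx⟩ i
      have := hx i.succ
      simpa [Fin.val_succ, shift] using this
  have hmeas := hstat.measure_preimage (measurableSet_cyl w).nullMeasurableSet
  have hdisj : Pairwise (Function.onFun Disjoint
      (fun a : A => {x : ℕ → A | ∀ i : Fin (L+1), x i.1 = (Fin.cons a w : Fin (L+1) → A) i})) := by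
    intro a b hab
    refine Set.disjoint_left.2 fun x hxa hxb => hab ?_
    have h1 := hxa 0
    have h2 := hxb 0
    simp at h1 h2
    rw [← h1, ← h2]
  have hμ := measure_iUnion (μ := μ) hdisj (fun a => measurableSet_cyl _)
  rw [cylP, ← hmeas, hpre, hμ, tsum_fintype]
  rw [ENNReal.toReal_sum (fun a _ => measure_ne_top μ _)]
  rfl

end Aux

section Aux2
variable {A : Type*} [MeasurableSpace A] [MeasurableSingletonClass A] [Fintype A]
variable (μ : Measure (ℕ → A)) [IsProbabilityMeasure μ]

lemma cylP_zero : cylP μ (fun i : Fin 0 => (Fin.elim0 i : A)) = 1 := by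
  have : {x : ℕ → A | ∀ i : Fin 0, x i.1 = Fin.elim0 i} = Set.univ := by
    ext x; simp [Fin.elim0]
  rw [cylP]
  simp only [this, measure_univ, ENNReal.toReal_one]

lemma sum_fin_succ_cons {L : ℕ} (f : (Fin (L+1) → A) → ℝ) :
    ∑ w : Fin (L+1) → A, f w = ∑ a : A, ∑ v : Fin L → A, f (Fin.cons a v) := by
  rw [← (Fintype.sum_equiv (Fin.consEquiv fun _ => A) (fun p => f (Fin.cons p.1 p.2))
    f (fun p => rfl)), Fintype.sum_prod_type]

lemma sum_fin_succ_snoc {L : ℕ} (f : (Fin (L+1) → A) → ℝ) :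
    ∑ w : Fin (L+1) → A, f w = ∑ v : Fin L → A, ∑ b : A, f (Fin.snoc v b) := by
  rw [← (Fintype.sum_equiv (Fin.snocEquiv fun _ => A) (fun p => f (Fin.snoc p.2 p.1))
    f (fun p => rfl)), Fintype.sum_prod_type]
  exact Finset.sum_comm

lemma sum_cylP_univ : ∀ L : ℕ, ∑ w : Fin L → A, cylP μ w = 1 := by
  intro L
  induction L with
  | zero =>
      rw [Fintype.sum_unique]
      have : (default : Fin 0 → A) = fun i : Fin 0 => (Fin.elim0 i : A) := by
        funext i; exact Fin.elim0 i
      rw [this, cylP_zero]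
  | succ L ih =>
      rw [sum_fin_succ_snoc (fun w => cylP μ w)]
      simp only [sum_cylP_snoc]
      exact ih

lemma cylP_snoc_le {L : ℕ} (w : Fin L → A) (a : A) : cylP μ (Fin.snoc w a) ≤ cylP μ w := by
  rw [← sum_cylP_snoc μ w]
  exact Finset.single_le_sum (fun b _ => cylP_nonneg μ _) (Finset.mem_univ a)

lemma cylP_cons_le (hstat : MeasurePreserving (shift (A := A)) μ μ) {L : ℕ} (w : Fin L → A)
    (a : A) : cylP μ (Fin.cons a w) ≤ cylP μ w := by
  rw [← sum_cylP_cons μ hstat w]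
  exact Finset.single_le_sum (f := fun b : A => cylP μ (Fin.cons b w))
    (fun b _ => cylP_nonneg μ _) (Finset.mem_univ a)

end Aux2

section Aux3
variable {A : Type*} [MeasurableSpace A] [MeasurableSingletonClass A] [Fintype A]
variable (μ : Measure (ℕ → A)) [IsProbabilityMeasure μ]

lemma blockH_eq (L : ℕ) :
    blockH μ L = (-∑ w : Fin L → A, cylP μ w * Real.log (cylP μ w)) / Real.log 2 := by
  rw [blockH, neg_div, Finset.sum_div]
  congr 1
  refine Finset.sum_congr rfl fun w _ => ?_
  rw [Real.logb, mul_div_assoc]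

lemma blockH_zero : blockH μ 0 = 0 := by
  rw [blockH, Fintype.sum_unique]
  have : (default : Fin 0 → A) = fun i : Fin 0 => (Fin.elim0 i : A) := by
    funext i; exact Fin.elim0 i
  rw [this, cylP_zero]
  simp

lemma blockH_mono (L : ℕ) : blockH μ L ≤ blockH μ (L + 1) := by
  rw [blockH_eq, blockH_eq]
  rw [div_le_div_iff_of_pos_right (Real.log_pos one_lt_two)]
  rw [neg_le_neg_iff]
  rw [sum_fin_succ_snoc (fun w => cylP μ w * Real.log (cylP μ w))]
  have hM : ∀ v : Fin L → A, cylP μ v * Real.log (cylP μ v)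
      = ∑ b : A, cylP μ (Fin.snoc v b) * Real.log (cylP μ v) := by
    intro v
    rw [← Finset.sum_mul, sum_cylP_snoc]
  calc ∑ v : Fin L → A, ∑ b : A, cylP μ (Fin.snoc v b) * Real.log (cylP μ (Fin.snoc v b))
      ≤ ∑ v : Fin L → A, ∑ b : A, cylP μ (Fin.snoc v b) * Real.log (cylP μ v) := by
        refine Finset.sum_le_sum fun v _ => Finset.sum_le_sum fun b _ => ?_
        by_cases h : cylP μ (Fin.snoc v b) = 0
        · rw [h]; simp
        · have hpos : 0 < cylP μ (Fin.snoc v b) := lt_of_le_of_ne (cylP_nonneg μ _) (Ne.symm h)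
          exact mul_le_mul_of_nonneg_left
            (Real.log_le_log hpos (cylP_snoc_le μ v b)) (le_of_lt hpos)
    _ = ∑ v : Fin L → A, cylP μ v * Real.log (cylP μ v) := by
        refine Finset.sum_congr rfl fun v _ => (hM v).symm

lemma blockH_one_le (hA : 2 ≤ Fintype.card A) :
    blockH μ 1 ≤ Real.logb 2 (Fintype.card A) := by
  rw [blockH_eq, Real.logb, div_le_div_iff_of_pos_right (Real.log_pos one_lt_two)]
  have hK : (0:ℝ) < (Fintype.card A : ℝ) := by positivity
  have key : ∑ w : Fin 1 → A, cylP μ w * (Real.log (1 / (Fintype.card A)) - Real.log (cylP μ w))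
      ≤ ∑ w : Fin 1 → A, (1 / (Fintype.card A : ℝ) - cylP μ w) := by
    refine Finset.sum_le_sum fun w _ => ?_
    by_cases h : cylP μ w = 0
    · rw [h]; simp
    · have hpos : 0 < cylP μ w := lt_of_le_of_ne (cylP_nonneg μ _) (Ne.symm h)
      have ht : (0:ℝ) < 1 / (Fintype.card A * cylP μ w) := by positivity
      have := Real.log_le_sub_one_of_pos ht
      have hrw : Real.log (1 / ((Fintype.card A : ℝ) * cylP μ w))
          = Real.log (1 / (Fintype.card A : ℝ)) - Real.log (cylP μ w) := by
        rw [one_div, one_div, Real.log_inv, Real.log_inv, Real.log_mul (ne_of_gt hK) h]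
        ring
      rw [hrw] at this
      calc cylP μ w * (Real.log (1 / (Fintype.card A : ℝ)) - Real.log (cylP μ w))
          ≤ cylP μ w * (1 / ((Fintype.card A : ℝ) * cylP μ w) - 1) :=
            mul_le_mul_of_nonneg_left this (le_of_lt hpos)
        _ = 1 / (Fintype.card A : ℝ) - cylP μ w := by
            field_simp
  have hsum1 : ∑ w : Fin 1 → A, cylP μ w = 1 := sum_cylP_univ μ 1
  have hcard : (Finset.univ : Finset (Fin 1 → A)).card = Fintype.card A := by
    rw [← Fintype.card_fin 1] at *
    simp [Fintype.card_fun]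
  have hRHS : ∑ w : Fin 1 → A, (1 / (Fintype.card A : ℝ) - cylP μ w) = 0 := by
    rw [Finset.sum_sub_distrib, hsum1, Finset.sum_const, hcard]
    rw [nsmul_eq_mul, mul_one_div_cancel (ne_of_gt hK), sub_self]
  rw [hRHS] at key
  have expand : ∑ w : Fin 1 → A, cylP μ w * (Real.log (1 / (Fintype.card A)) - Real.log (cylP μ w))
      = -Real.log (Fintype.card A) - ∑ w : Fin 1 → A, cylP μ w * Real.log (cylP μ w) := by
    simp only [mul_sub]
    rw [Finset.sum_sub_distrib, ← Finset.sum_mul, hsum1, one_mul, one_div, Real.log_inv]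
  rw [expand] at key
  linarith

end Aux3

section Aux4
variable {A : Type*} [MeasurableSpace A] [MeasurableSingletonClass A] [Fintype A]
variable (μ : Measure (ℕ → A)) [IsProbabilityMeasure μ]

lemma blockH_concave (hstat : MeasurePreserving (shift (A := A)) μ μ) (m : ℕ) :
    blockH μ (m + 2) - blockH μ (m + 1) ≤ blockH μ (m + 1) - blockH μ m := by
  classical
  set P : A → (Fin m → A) → A → ℝ := fun a v b => cylP μ (Fin.cons a (Fin.snoc v b)) with hP
  set Q : A → (Fin m → A) → ℝ := fun a v => cylP μ (Fin.cons a v) with hQ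
  set R : (Fin m → A) → A → ℝ := fun v b => cylP μ (Fin.snoc v b) with hR
  set M : (Fin m → A) → ℝ := fun v => cylP μ v with hM
  -- marginals
  have hPQ : ∀ a v, ∑ b : A, P a v b = Q a v := by
    intro a v
    simp only [hP, Fin.cons_snoc_eq_snoc_cons]
    exact sum_cylP_snoc μ (Fin.cons a v)
  have hPR : ∀ v b, ∑ a : A, P a v b = R v b := fun v b => sum_cylP_cons μ hstat (Fin.snoc v b)
  have hQM : ∀ v, ∑ a : A, Q a v = M v := fun v => sum_cylP_cons μ hstat v
  have hRM : ∀ v, ∑ b : A, R v b = M v := fun v => sum_cylP_snoc μ v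
  -- pointwise bounds
  have hP0 : ∀ a v b, 0 ≤ P a v b := fun a v b => cylP_nonneg μ _
  have hQ0 : ∀ a v, 0 ≤ Q a v := fun a v => cylP_nonneg μ _
  have hR0 : ∀ v b, 0 ≤ R v b := fun v b => cylP_nonneg μ _
  have hM0 : ∀ v, 0 ≤ M v := fun v => cylP_nonneg μ _
  have hPleQ : ∀ a v b, P a v b ≤ Q a v := by
    intro a v b
    simp only [hP, Fin.cons_snoc_eq_snoc_cons]
    exact cylP_snoc_le μ (Fin.cons a v) b
  have hPleR : ∀ a v b, P a v b ≤ R v b := fun a v b => cylP_cons_le μ hstat (Fin.snoc v b) a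
  have hQleM : ∀ a v, Q a v ≤ M v := fun a v => cylP_cons_le μ hstat v a
  -- entropy sums as triple sums
  have hH2 : ∑ w : Fin (m+2) → A, cylP μ w * Real.log (cylP μ w)
      = ∑ a : A, ∑ v : Fin m → A, ∑ b : A, P a v b * Real.log (P a v b) := by
    rw [sum_fin_succ_cons (fun w => cylP μ w * Real.log (cylP μ w))]
    refine Finset.sum_congr rfl fun a _ => ?_
    rw [sum_fin_succ_snoc (fun u => cylP μ (Fin.cons a u) * Real.log (cylP μ (Fin.cons a u)))]
  have hH1Q : ∑ w : Fin (m+1) → A, cylP μ w * Real.log (cylP μ w)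
      = ∑ a : A, ∑ v : Fin m → A, Q a v * Real.log (Q a v) :=
    sum_fin_succ_cons (fun w => cylP μ w * Real.log (cylP μ w))
  have hH1R : ∑ w : Fin (m+1) → A, cylP μ w * Real.log (cylP μ w)
      = ∑ v : Fin m → A, ∑ b : A, R v b * Real.log (R v b) :=
    sum_fin_succ_snoc (fun w => cylP μ w * Real.log (cylP μ w))
  -- total mass one
  have hPsum : ∑ a : A, ∑ v : Fin m → A, ∑ b : A, P a v b = 1 := by
    have h := sum_cylP_univ μ (m+2)
    rw [sum_fin_succ_cons (fun w => cylP μ w)] at h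
    rw [← h]
    refine Finset.sum_congr rfl fun a _ => ?_
    exact (sum_fin_succ_snoc (fun u => cylP μ (Fin.cons a u))).symm
  have hMsum : ∑ v : Fin m → A, M v = 1 := sum_cylP_univ μ m
  -- lifting marginals into triple sums
  have e1 : ∑ a : A, ∑ v : Fin m → A, ∑ b : A, P a v b * Real.log (Q a v)
      = ∑ a : A, ∑ v : Fin m → A, Q a v * Real.log (Q a v) := by
    refine Finset.sum_congr rfl fun a _ => Finset.sum_congr rfl fun v _ => ?_
    rw [← Finset.sum_mul, hPQ]
  have e2 : ∑ a : A, ∑ v : Fin m → A, ∑ b : A, P a v b * Real.log (R v b)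
      = ∑ v : Fin m → A, ∑ b : A, R v b * Real.log (R v b) := by
    rw [Finset.sum_comm]
    refine Finset.sum_congr rfl fun v _ => ?_
    rw [Finset.sum_comm]
    refine Finset.sum_congr rfl fun b _ => ?_
    rw [← Finset.sum_mul, hPR]
  have e3 : ∑ a : A, ∑ v : Fin m → A, ∑ b : A, P a v b * Real.log (M v)
      = ∑ v : Fin m → A, M v * Real.log (M v) := by
    rw [Finset.sum_comm]
    refine Finset.sum_congr rfl fun v _ => ?_
    have h0 : ∀ a : A, ∑ b : A, P a v b * Real.log (M v) = Q a v * Real.log (M v) := by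
      intro a; rw [← Finset.sum_mul, hPQ]
    rw [Finset.sum_congr rfl fun a _ => h0 a, ← Finset.sum_mul, hQM]
  -- the Gibbs bound
  have key : ∑ a : A, ∑ v : Fin m → A, ∑ b : A,
      P a v b * (Real.log (Q a v) + Real.log (R v b) - Real.log (M v) - Real.log (P a v b))
      ≤ 0 := by
    have hg : ∑ a : A, ∑ v : Fin m → A, ∑ b : A,
        P a v b * (Real.log (Q a v) + Real.log (R v b) - Real.log (M v) - Real.log (P a v b))
        ≤ ∑ a : A, ∑ v : Fin m → A, ∑ b : A,
          ((if M v = 0 then 0 else Q a v * R v b / M v) - P a v b) := by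
      refine Finset.sum_le_sum fun a _ => Finset.sum_le_sum fun v _ =>
        Finset.sum_le_sum fun b _ => ?_
      by_cases hp : P a v b = 0
      · rw [hp, zero_mul, sub_zero]
        split_ifs with hm
        · exact le_refl 0
        · exact div_nonneg (mul_nonneg (hQ0 a v) (hR0 v b)) (hM0 v)
      · have hp3 : 0 < P a v b := lt_of_le_of_ne (hP0 a v b) (Ne.symm hp)
        have hq : 0 < Q a v := lt_of_lt_of_le hp3 (hPleQ a v b)
        have hr : 0 < R v b := lt_of_lt_of_le hp3 (hPleR a v b)
        have hm : 0 < M v := lt_of_lt_of_le hq (hQleM a v)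
        rw [if_neg (ne_of_gt hm)]
        have ht : 0 < Q a v * R v b / (M v * P a v b) := by positivity
        have hlog : Real.log (Q a v * R v b / (M v * P a v b))
            = Real.log (Q a v) + Real.log (R v b) - Real.log (M v) - Real.log (P a v b) := by
          rw [Real.log_div (by positivity) (by positivity),
            Real.log_mul (ne_of_gt hq) (ne_of_gt hr),
            Real.log_mul (ne_of_gt hm) (ne_of_gt hp3)]
          ring
        calc P a v b * (Real.log (Q a v) + Real.log (R v b)
              - Real.log (M v) - Real.log (P a v b))
            = P a v b * Real.log (Q a v * R v b / (M v * P a v b)) := by rw [hlog]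
          _ ≤ P a v b * (Q a v * R v b / (M v * P a v b) - 1) :=
              mul_le_mul_of_nonneg_left (Real.log_le_sub_one_of_pos ht) hp3.le
          _ = Q a v * R v b / M v - P a v b := by
              field_simp
    refine le_trans hg (le_of_eq ?_)
    simp only [Finset.sum_sub_distrib]
    rw [hPsum]
    have per : ∀ v : Fin m → A,
        ∑ a : A, ∑ b : A, (if M v = 0 then 0 else Q a v * R v b / M v) = M v := by
      intro v
      by_cases hm : M v = 0
      · simp [hm]
      · simp only [if_neg hm]
        have inner : ∀ a : A, ∑ b : A, Q a v * R v b / M v = Q a v := by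
          intro a
          rw [← Finset.sum_div, ← Finset.mul_sum, hRM, mul_div_assoc,
            div_self hm, mul_one]
        rw [Finset.sum_congr rfl fun a _ => inner a, hQM]
    have : ∑ a : A, ∑ v : Fin m → A, ∑ b : A, (if M v = 0 then 0 else Q a v * R v b / M v)
        = 1 := by
      rw [Finset.sum_comm, Finset.sum_congr rfl fun v _ => per v, hMsum]
    rw [this]
    ring
  -- put it together
  have e0 : ∑ w : Fin m → A, cylP μ w * Real.log (cylP μ w)
      = ∑ v : Fin m → A, M v * Real.log (M v) := rfl
  rw [blockH_eq, blockH_eq, blockH_eq, div_sub_div_same, div_sub_div_same,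
    div_le_div_iff_of_pos_right (Real.log_pos one_lt_two)]
  simp only [mul_sub, mul_add, Finset.sum_add_distrib, Finset.sum_sub_distrib] at key
  rw [e1, e2, e3] at key
  linarith [key, hH2, hH1Q, hH1R, e0]

end Aux4


/-- The second difference `Δ²H(L)` of the block entropy, with the boundary
convention `ΔH(0) := log₂|A|`, so that `Δ²H(1) = H(1) - log₂|A|` and
`Δ²H(L) = H(L) - 2H(L-1) + H(L-2)` for `L ≥ 2`. -/
noncomputable def d2H {A : Type*} [MeasurableSpace A] [Fintype A]
    (μ : Measure (ℕ → A)) : ℕ → ℝ := fun L =>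
  if L = 1 then blockH μ 1 - Real.logb 2 (Fintype.card A)
  else blockH μ L - 2 * blockH μ (L - 1) + blockH μ (L - 2)

/-- The third difference `Δ³H(L) = Δ²H(L) - Δ²H(L-1)` for `L ≥ 2`. -/
noncomputable def d3H {A : Type*} [MeasurableSpace A] [Fintype A]
    (μ : Measure (ℕ → A)) : ℕ → ℝ := fun L => d2H μ L - d2H μ (L - 1)

set_option maxHeartbeats 1000000 in
/-- If `Σ_{L=2}^∞ (L-1)·Δ³H(L)` converges (to `S`), then the total
predictability `G = Σ_{L=1}^∞ Δ²H(L)` converges and `G = -Σ_{L=2}^∞ (L-1)·Δ³H(L)`. -/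
theorem total_predictability_eq_weighted_third_difference
    {A : Type*} [MeasurableSpace A] [MeasurableSingletonClass A] [Fintype A]
    (hA : 2 ≤ Fintype.card A)
    (μ : Measure (ℕ → A)) [IsProbabilityMeasure μ]
    (hstat : MeasurePreserving (shift (A := A)) μ μ)
    (S : ℝ)
    (hS : Tendsto (fun N : ℕ => ∑ L ∈ Finset.range N, ((L : ℝ) + 1) * d3H μ (L + 2))
      atTop (nhds S)) :
    Tendsto (fun N : ℕ => ∑ L ∈ Finset.range N, d2H μ (L + 1)) atTop (nhds (-S)) := by
  classical
  set D : ℕ → ℝ := fun L => if L = 0 then Real.logb 2 (Fintype.card A)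
    else blockH μ L - blockH μ (L - 1) with hDdef
  have hc : ∀ L : ℕ, d2H μ (L + 1) = D (L + 1) - D L := by
    intro L
    cases L with
    | zero =>
        simp only [hDdef, d2H]
        norm_num [blockH_zero μ]
    | succ L =>
        have h1 : L + 1 + 1 ≠ 1 := by omega
        have e : L + 1 + 1 - 2 = L := by omega
        have e2 : L + 1 + 1 - 1 = L + 1 := by omega
        simp only [hDdef, d2H, if_neg h1, if_neg (Nat.succ_ne_zero (L+1)),
          if_neg (Nat.succ_ne_zero L), e, e2, Nat.add_sub_cancel]
        ring
  have hanti : ∀ L : ℕ, D (L + 1) ≤ D L := by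
    intro L
    cases L with
    | zero =>
        simp only [hDdef]
        norm_num [blockH_zero μ]
        exact blockH_one_le μ hA
    | succ L =>
        simp only [hDdef]
        norm_num
        have := blockH_concave μ hstat L
        linarith
  have hDnonneg : ∀ L : ℕ, 0 ≤ D L := by
    intro L
    cases L with
    | zero =>
        simp only [hDdef, if_pos rfl]
        refine Real.logb_nonneg one_lt_two ?_
        exact_mod_cast le_trans (by norm_num) hA
    | succ L =>
        simp only [hDdef]
        norm_num
        exact blockH_mono μ L
  have hcle : ∀ L : ℕ, d2H μ (L + 1) ≤ 0 := by
    intro L; rw [hc L]; linarith [hanti L]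
  have hG : ∀ N : ℕ, ∑ L ∈ Finset.range N, d2H μ (L + 1) = D N - D 0 := by
    intro N
    rw [Finset.sum_congr rfl fun L _ => hc L]
    exact Finset.sum_range_sub D N
  -- convergence of D
  have hDanti : Antitone D := antitone_nat_of_succ_le hanti
  have hDbdd : BddBelow (Set.range D) := ⟨0, fun x ⟨L, hL⟩ => hL ▸ hDnonneg L⟩
  have hDlim : Tendsto D atTop (nhds (⨅ L, D L)) := tendsto_atTop_ciInf hDanti hDbdd
  set d : ℝ := ⨅ L, D L with hd
  have hGlim : Tendsto (fun N : ℕ => ∑ L ∈ Finset.range N, d2H μ (L + 1))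
      atTop (nhds (d - D 0)) := by
    have : Tendsto (fun N : ℕ => D N - D 0) atTop (nhds (d - D 0)) :=
      hDlim.sub_const (D 0)
    exact this.congr fun N => (hG N).symm
  -- Abel summation identity
  have hd3 : ∀ L : ℕ, d3H μ (L + 2) = d2H μ (L + 2) - d2H μ (L + 1) := fun L => rfl
  have hAbel : ∀ N : ℕ, ∑ L ∈ Finset.range N, ((L : ℝ) + 1) * d3H μ (L + 2)
      = (N : ℝ) * d2H μ (N + 1) - ∑ L ∈ Finset.range N, d2H μ (L + 1) := by
    intro N
    induction N with
    | zero => simp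
    | succ N ih =>
        rw [Finset.sum_range_succ, ih, Finset.sum_range_succ, hd3]
        push_cast
        ring
  -- N·c(N+1) converges to lam := S + (d - D 0)
  set lam : ℝ := S + (d - D 0) with hlam
  have hNc : Tendsto (fun N : ℕ => (N : ℝ) * d2H μ (N + 1)) atTop (nhds lam) := by
    have := hS.add hGlim
    refine this.congr fun N => ?_
    rw [hAbel N]; ring
  have hlamle : lam ≤ 0 := by
    refine le_of_tendsto hNc (Eventually.of_forall fun N => ?_)
    exact mul_nonpos_of_nonneg_of_nonpos (Nat.cast_nonneg N) (hcle N)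
  -- summability of the nonnegative series -c(L+1)
  have hsummable : Summable (fun L : ℕ => -(d2H μ (L + 1))) := by
    refine summable_of_sum_range_le (c := D 0) (fun L => by linarith [hcle L]) fun N => ?_
    rw [Finset.sum_neg_distrib, hG N]
    linarith [hDnonneg N]
  -- lam must be zero
  have hlam0 : lam = 0 := by
    by_contra h
    have hlamlt : lam < 0 := lt_of_le_of_ne hlamle h
    have hev : ∀ᶠ N : ℕ in atTop, (N : ℝ) * d2H μ (N + 1) < lam / 2 :=
      hNc.eventually_lt_const (by linarith)
    obtain ⟨N₀, hN₀⟩ := hev.exists_forall_of_atTop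
    set N₁ : ℕ := max N₀ 1 with hN₁
    have hbound : ∀ n : ℕ, (-lam / 2) * (1 / ((n : ℝ) + N₁)) ≤ -(d2H μ (n + N₁ + 1)) := by
      intro n
      have hge : N₀ ≤ n + N₁ := le_trans (le_max_left _ _) (Nat.le_add_left _ _)
      have h1 : (1 : ℝ) ≤ (n : ℝ) + N₁ := by
        have : (1 : ℕ) ≤ n + N₁ := le_trans (le_max_right _ _) (Nat.le_add_left _ _)
        exact_mod_cast this
      have hpos : (0 : ℝ) < (n : ℝ) + N₁ := by linarith
      have hlt := hN₀ (n + N₁) hge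
      push_cast at hlt
      rw [mul_comm] at hlt
      have h2 : d2H μ (n + N₁ + 1) < lam / 2 / ((n : ℝ) + N₁) := (lt_div_iff₀ hpos).2 hlt
      have h3 : (-lam / 2) * (1 / ((n : ℝ) + N₁)) = -(lam / 2 / ((n : ℝ) + N₁)) := by ring
      rw [h3]
      linarith
    have hsum2 : Summable (fun n : ℕ => (-lam / 2) * (1 / ((n : ℝ) + N₁))) := by
      refine Summable.of_nonneg_of_le (fun n => ?_) hbound ?_
      · have : (0:ℝ) < (n : ℝ) + N₁ := by positivity
        have : (0:ℝ) ≤ -lam / 2 := by linarith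
        positivity
      · exact (summable_nat_add_iff (f := fun L : ℕ => -(d2H μ (L + 1))) N₁).mpr hsummable
    have hsum3 : Summable (fun n : ℕ => 1 / ((n : ℝ) + N₁)) := by
      have h4 := hsum2.mul_left (2 / (-lam))
      refine h4.congr fun n => ?_
      have hne : lam ≠ 0 := h
      field_simp
    have hsum4 : Summable (fun n : ℕ => 1 / (((n + N₁ : ℕ)) : ℝ)) :=
      hsum3.congr fun n => by push_cast; ring
    exact Real.not_summable_one_div_natCast
      ((summable_nat_add_iff (f := fun n : ℕ => 1 / (n : ℝ)) N₁).mp hsum4)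
  have : d - D 0 = -S := by rw [hlam] at hlam0; linarith
  rw [← this]
  exact hGlim
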